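/- Let q be a prime power with q ≡ 1 (mod 4), and let n be an odd positive integer. Let χ be a nontrivial multiplicative character of F_{q^n} and let c ∈ F_q^* be a nonsquare in F_q. Then |X₁(χ)| + |X_c(χ)| ≤ 2√2 · q^{n/2}, where X_b(χ) = Σ_{ξ ∈ F_{q^n}^*} χ(ξ) ψ(b ξ²) and q^{n/2} denotes the positive real square root of q^n. -/

import Mathlib

/-- The canonical additive character of a finite field `K` of characteristic `p`:
`ψ(x) = exp(2πi · Tr₀(x)/p)` where `Tr₀` is the absolute trace down to the prime field. -/
noncomputable def canonAddChar (p : ℕ) (K : Type*) [Field K] [Fintype K] [CharP K p]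
    [Algebra (ZMod p) K] (x : K) : ℂ :=
  Complex.exp (2 * Real.pi * Complex.I * ((Algebra.trace (ZMod p) K x).val : ℂ) / (p : ℂ))



open Complex Finset

lemma exp_mod_eq (p : ℕ) (hp : p ≠ 0) (m : ℕ) :
    Complex.exp (2 * Real.pi * Complex.I * ((m % p : ℕ) : ℂ) / p) =
      Complex.exp (2 * Real.pi * Complex.I * (m : ℂ) / p) := by
  have hpc : (p : ℂ) ≠ 0 := Nat.cast_ne_zero.mpr hp
  have hm : (m : ℂ) = ((m % p : ℕ) : ℂ) + ((m / p : ℕ) : ℂ) * p := by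
    have h0 : ((p * (m / p) + m % p : ℕ) : ℂ) = (m : ℂ) :=
      congrArg (Nat.cast : ℕ → ℂ) (Nat.div_add_mod m p)
    push_cast at h0
    linear_combination -h0
  rw [hm, show 2 * (Real.pi:ℂ) * Complex.I * (((m % p : ℕ) : ℂ) + ((m / p : ℕ) : ℂ) * p) / p
      = 2 * (Real.pi:ℂ) * Complex.I * ((m % p : ℕ) : ℂ) / p
        + ((m / p : ℕ) : ℂ) * (2 * (Real.pi:ℂ) * Complex.I) from by field_simp,
    Complex.exp_add,
    show ((m / p : ℕ) : ℂ) = (((m / p : ℕ) : ℤ) : ℂ) from (Int.cast_natCast _).symm,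
    Complex.exp_int_mul_two_pi_mul_I, mul_one]

section K
variable (p : ℕ) [Fact p.Prime] (K : Type*) [Field K] [Fintype K] [CharP K p]
  [Algebra (ZMod p) K]

lemma canonAddChar_add (x y : K) :
    canonAddChar p K (x + y) = canonAddChar p K x * canonAddChar p K y := by
  have hp : p ≠ 0 := (Fact.out : p.Prime).ne_zero
  unfold canonAddChar
  rw [map_add, ← Complex.exp_add]
  have : 2 * (Real.pi:ℂ) * Complex.I * (((Algebra.trace (ZMod p) K x).val : ℕ) : ℂ) / p
      + 2 * (Real.pi:ℂ) * Complex.I * (((Algebra.trace (ZMod p) K y).val : ℕ) : ℂ) / p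
      = 2 * (Real.pi:ℂ) * Complex.I
        * ((((Algebra.trace (ZMod p) K x).val + (Algebra.trace (ZMod p) K y).val : ℕ)) : ℂ) / p := by
    push_cast; ring
  rw [this, ZMod.val_add, exp_mod_eq p hp]

lemma canonAddChar_zero : canonAddChar p K 0 = 1 := by
  unfold canonAddChar
  simp

lemma canonAddChar_ne_zero (x : K) : canonAddChar p K x ≠ 0 := Complex.exp_ne_zero _

lemma canonAddChar_abs (x : K) : ‖canonAddChar p K x‖ = 1 := by
  unfold canonAddChar
  rw [show 2 * (Real.pi:ℂ) * Complex.I * (((Algebra.trace (ZMod p) K x).val : ℕ) : ℂ) / p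
    = ((2 * Real.pi * ((Algebra.trace (ZMod p) K x).val : ℝ) / p : ℝ) : ℂ) * Complex.I from by
      push_cast; ring]
  exact Complex.norm_exp_ofReal_mul_I _

lemma canonAddChar_conj (x : K) :
    (starRingEnd ℂ) (canonAddChar p K x) = canonAddChar p K (-x) := by
  have h1 : canonAddChar p K x * (starRingEnd ℂ) (canonAddChar p K x) = 1 := by
    rw [Complex.mul_conj, Complex.normSq_eq_norm_sq, canonAddChar_abs]; norm_num
  have h2 : canonAddChar p K x * canonAddChar p K (-x) = 1 := by
    rw [← canonAddChar_add, add_neg_cancel, canonAddChar_zero]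
  exact mul_left_cancel₀ (canonAddChar_ne_zero p K x) (h1.trans h2.symm)

lemma canonAddChar_ne_one (x : K) (hx : Algebra.trace (ZMod p) K x ≠ 0) :
    canonAddChar p K x ≠ 1 := by
  intro h
  unfold canonAddChar at h
  rw [Complex.exp_eq_one_iff] at h
  obtain ⟨k, hk⟩ := h
  have hpc : (p : ℂ) ≠ 0 := Nat.cast_ne_zero.mpr (Fact.out : p.Prime).ne_zero
  set v : ℕ := (Algebra.trace (ZMod p) K x).val with hv
  have hπ : (Real.pi : ℂ) ≠ 0 := Complex.ofReal_ne_zero.mpr Real.pi_ne_zero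
  have h2πI : (2 * (Real.pi:ℂ) * Complex.I) ≠ 0 :=
    mul_ne_zero (mul_ne_zero two_ne_zero hπ) Complex.I_ne_zero
  have hvk : (v : ℂ) = k * p := by
    rw [div_eq_iff hpc] at hk
    have hz : (2 * (Real.pi:ℂ) * Complex.I) * ((v:ℂ) - k * p) = 0 := by
      linear_combination hk
    rcases mul_eq_zero.mp hz with h | h
    · exact absurd h h2πI
    · linear_combination h
  have hvz : (v : ℤ) = k * p := by exact_mod_cast hvk
  have hdvd : (p : ℤ) ∣ (v : ℤ) := ⟨k, by linarith⟩
  have hdvd' : p ∣ v := Int.natCast_dvd_natCast.mp hdvd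
  have hvpos : 0 < v := Nat.pos_of_ne_zero (fun h0 => hx ((ZMod.val_eq_zero _).mp h0))
  exact absurd (Nat.le_of_dvd hvpos hdvd') (not_le.mpr (ZMod.val_lt _))

lemma trace_exists_ne_zero : ∃ x : K, Algebra.trace (ZMod p) K x ≠ 0 := by
  have h := (traceForm_nondegenerate (ZMod p) K).1 1
  simp_rw [Algebra.traceForm_apply, one_mul] at h
  by_contra hf
  push_neg at hf
  exact one_ne_zero (h hf)

lemma sum_units_eq (g : K → ℂ) [DecidableEq K] :
    ∑ x : K, g x = g 0 + ∑ t : Kˣ, g ↑t := by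
  have h1 : ∑ t : Kˣ, g ↑t = ∑ x : {x : K // x ≠ 0}, g ↑x :=
    Fintype.sum_equiv unitsEquivNeZero _ _ (fun t => rfl)
  have h2 : ∑ x ∈ Finset.univ.erase (0:K), g x = ∑ x : {x : K // x ≠ 0}, g ↑x :=
    Finset.sum_subtype _ (fun x => by
      rw [Finset.mem_erase]
      exact ⟨fun h => h.1, fun h => ⟨h, Finset.mem_univ x⟩⟩) g
  rw [h1, ← h2, Finset.add_sum_erase _ _ (Finset.mem_univ 0)]

lemma canonAddChar_sum_eq_zero (u : K) (hu : u ≠ 0) :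
    ∑ x : K, canonAddChar p K (u * x) = 0 := by
  obtain ⟨x₀, hx₀⟩ := trace_exists_ne_zero p K
  set y : K := u⁻¹ * x₀ with hy
  have huy : u * y = x₀ := by rw [hy, mul_inv_cancel_left₀ hu]
  have hne : canonAddChar p K (u * y) ≠ 1 := huy ▸ canonAddChar_ne_one p K x₀ hx₀
  have shift : ∑ x : K, canonAddChar p K (u * x)
      = canonAddChar p K (u * y) * ∑ x : K, canonAddChar p K (u * x) := by
    calc ∑ x : K, canonAddChar p K (u * x)
        = ∑ x : K, canonAddChar p K (u * (x + y)) :=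
          (Fintype.sum_equiv (Equiv.addRight y) _ _ (fun x => rfl)).symm
      _ = ∑ x : K, canonAddChar p K (u * y) * canonAddChar p K (u * x) := by
          refine Finset.sum_congr rfl fun x _ => ?_
          rw [mul_add, canonAddChar_add, mul_comm]
      _ = canonAddChar p K (u * y) * ∑ x : K, canonAddChar p K (u * x) := by
          rw [Finset.mul_sum]
  have : (1 - canonAddChar p K (u * y)) * ∑ x : K, canonAddChar p K (u * x) = 0 := by
    rw [sub_mul, one_mul, ← shift, sub_self]
  rcases mul_eq_zero.mp this with h | h
  · exact absurd (by linear_combination -h : canonAddChar p K (u*y) = 1) hne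
  · exact h

end K
open Finset

section E2
variable {E : Type*} [Field E] [Fintype E] [DecidableEq E]

lemma count_sq (h2 : (2:E) ≠ 0) (t : Eˣ) :
    (Finset.univ.filter (fun ζ : Eˣ => ζ^2 = t)).card = if IsSquare (t:E) then 2 else 0 := by
  by_cases hs : IsSquare (t:E)
  · obtain ⟨x, hx⟩ := hs
    have hx0 : x ≠ 0 := by rintro rfl; exact t.ne_zero (by rw [hx, mul_zero])
    set w : Eˣ := Units.mk0 x hx0 with hw
    have hwv : (w : E) = x := rfl
    have hwne : w ≠ -w := by
      intro h
      have hxx : (x : E) = -x := by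
        have := congrArg (Units.val) h; rwa [Units.val_neg, hwv] at this
      have hx2 : (2:E) * x = 0 := by linear_combination hxx
      rcases mul_eq_zero.mp hx2 with h'|h'
      exacts [h2 h', hx0 h']
    have hfil : Finset.univ.filter (fun ζ : Eˣ => ζ^2 = t) = {w, -w} := by
      ext ζ
      simp only [Finset.mem_filter, Finset.mem_univ, true_and, Finset.mem_insert,
        Finset.mem_singleton]
      constructor
      · intro h
        have hsq : (ζ:E)^2 = (w:E)^2 := by
          rw [← Units.val_pow_eq_pow_val, h, hwv, hx]; ring
        rcases sq_eq_sq_iff_eq_or_eq_neg.mp hsq with h'|h'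
        · exact Or.inl (Units.ext h')
        · exact Or.inr (Units.ext (by rw [h', Units.val_neg]))
      · rintro (rfl|rfl)
        · exact Units.ext (by rw [Units.val_pow_eq_pow_val, hwv, hx]; ring)
        · exact Units.ext (by
            rw [Units.val_pow_eq_pow_val, Units.val_neg, hwv, hx]; ring)
    rw [hfil, if_pos ⟨x, hx⟩, Finset.card_insert_of_notMem (by simpa using hwne),
      Finset.card_singleton]
  · rw [if_neg hs, Finset.card_eq_zero, Finset.filter_eq_empty_iff]
    intro ζ _ h
    exact hs ⟨(ζ:E), by rw [← h, Units.val_pow_eq_pow_val]; ring⟩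

lemma isSquare_mul_nonsquare_iff {b x : E} (hb0 : b ≠ 0) (hb : ¬ IsSquare b) (hx0 : x ≠ 0) :
    IsSquare (b * x) ↔ ¬ IsSquare x := by
  have hbx : b * x ≠ 0 := mul_ne_zero hb0 hx0
  have hχb : quadraticChar E b = -1 := by
    rcases quadraticChar_dichotomy hb0 with h|h
    · exact absurd ((quadraticChar_one_iff_isSquare hb0).mp h) hb
    · exact h
  rw [← quadraticChar_one_iff_isSquare hbx, ← quadraticChar_one_iff_isSquare hx0, map_mul, hχb]
  rcases quadraticChar_dichotomy hx0 with h|h <;> rw [h] <;> norm_num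

lemma not_isSquare_inv {b : E} (hb0 : b ≠ 0) (hb : ¬ IsSquare b) : ¬ IsSquare b⁻¹ := by
  rintro ⟨y, hy⟩
  have hy0 : y ≠ 0 := by rintro rfl; rw [mul_zero] at hy; exact hb0 (inv_eq_zero.mp hy)
  exact hb ⟨y⁻¹, by rw [← mul_inv]; rw [← hy, inv_inv]⟩

lemma fiber_sum (h2 : (2:E) ≠ 0) (c' : E) (hc0 : c' ≠ 0) (hcns : ¬ IsSquare c') (f : E → ℂ) :
    (∑ ζ : Eˣ, f ((ζ:E)^2)) + (∑ ζ : Eˣ, f (c' * (ζ:E)^2)) = 2 * ∑ s : Eˣ, f (s:E) := by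
  classical
  set cu : Eˣ := Units.mk0 c' hc0 with hcu
  have h1 : ∑ ζ : Eˣ, f ((ζ:E)^2)
      = ∑ s : Eˣ, ((Finset.univ.filter (fun ζ : Eˣ => ζ^2 = s)).card) • f (s:E) := by
    rw [← Finset.sum_fiberwise Finset.univ (fun ζ : Eˣ => ζ^2) (fun ζ : Eˣ => f ((ζ:E)^2))]
    refine Finset.sum_congr rfl fun s _ => ?_
    rw [Finset.sum_congr rfl (fun ζ hζ => ?_), Finset.sum_const]
    rw [← Units.val_pow_eq_pow_val, (Finset.mem_filter.mp hζ).2]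
  have h1' : ∑ ζ : Eˣ, f (c' * (ζ:E)^2)
      = ∑ s : Eˣ, ((Finset.univ.filter (fun ζ : Eˣ => cu * ζ^2 = s)).card) • f (s:E) := by
    rw [← Finset.sum_fiberwise Finset.univ (fun ζ : Eˣ => cu * ζ^2)
      (fun ζ : Eˣ => f (c' * (ζ:E)^2))]
    refine Finset.sum_congr rfl fun s _ => ?_
    rw [Finset.sum_congr rfl (fun ζ hζ => ?_), Finset.sum_const]
    rw [show c' * (ζ:E)^2 = ((cu * ζ^2 : Eˣ) : E) from by
      rw [Units.val_mul, Units.val_pow_eq_pow_val]; rfl,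
      (Finset.mem_filter.mp hζ).2]
  have hcount : ∀ s : Eˣ,
      (Finset.univ.filter (fun ζ : Eˣ => ζ^2 = s)).card
      + (Finset.univ.filter (fun ζ : Eˣ => cu * ζ^2 = s)).card = 2 := by
    intro s
    have hiff : ∀ ζ : Eˣ, (cu * ζ^2 = s) ↔ (ζ^2 = cu⁻¹ * s) := by
      intro ζ
      constructor
      · intro h; rw [← h]; rw [inv_mul_cancel_left]
      · intro h; rw [h, mul_inv_cancel_left]
    rw [Finset.filter_congr (fun ζ _ => hiff ζ), count_sq h2 s, count_sq h2 (cu⁻¹ * s)]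
    have hval : ((cu⁻¹ * s : Eˣ) : E) = c'⁻¹ * (s:E) := by
      rw [Units.val_mul]
      congr 1
    rw [hval]
    by_cases hs : IsSquare ((s:E))
    · rw [if_pos hs, if_neg]
      intro hcontra
      exact ((isSquare_mul_nonsquare_iff (inv_ne_zero hc0)
        (not_isSquare_inv hc0 hcns) s.ne_zero).mp hcontra) hs
    · rw [if_neg hs, if_pos]
      exact (isSquare_mul_nonsquare_iff (inv_ne_zero hc0)
        (not_isSquare_inv hc0 hcns) s.ne_zero).mpr hs
  rw [h1, h1', ← Finset.sum_add_distrib]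
  rw [Finset.sum_congr rfl (fun s _ => by rw [← add_smul, hcount s])]
  simp only [nsmul_eq_mul, Nat.cast_ofNat, Finset.mul_sum]

end E2
open Finset

lemma odd_geom_sum {q n : ℕ} (hq2 : q % 2 = 1) (hnodd : Odd n) :
    Odd (∑ i ∈ Finset.range n, q ^ i) := by
  set s : ℕ := ∑ i ∈ Finset.range n, q ^ i with hs
  have hq' : ((q:ℕ) : ZMod 2) = 1 := by
    rw [← ZMod.natCast_mod, hq2, Nat.cast_one]
  have hn' : ((n:ℕ) : ZMod 2) = 1 := by
    rw [← ZMod.natCast_mod, Nat.odd_iff.mp hnodd, Nat.cast_one]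
  have hcast : ((s : ℕ) : ZMod 2) = 1 := by
    rw [hs]
    push_cast
    simp [hq', hn']
  rcases Nat.even_or_odd s with he|ho
  · exfalso
    have : ((s:ℕ) : ZMod 2) = 0 := by
      rw [← ZMod.natCast_mod, Nat.even_iff.mp he, Nat.cast_zero]
    rw [this] at hcast
    exact absurd hcast (by decide)
  · exact ho

lemma nonsquare_ext {F E : Type*} [Field F] [Fintype F] [Field E] [Fintype E] [Algebra F E]
    (q n : ℕ) (hF : Fintype.card F = q) (hE : Fintype.card E = q ^ n)
    (hq2 : q % 2 = 1) (hnodd : Odd n) (hch : ringChar F ≠ 2)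
    (c : F) (hc0 : c ≠ 0) (hc : ¬ IsSquare c) (hne : (-1:E) ≠ 1) :
    ¬ IsSquare (algebraMap F E c) := by
  have hq1 : 1 ≤ q := by omega
  set s : ℕ := ∑ i ∈ Finset.range n, q ^ i with hs
  have hsodd : Odd s := odd_geom_sum hq2 hnodd
  have hx : c ^ (q / 2) = -1 := by
    have h1 : c ^ (q / 2) * c ^ (q / 2) = 1 := by
      rw [← pow_add]
      have hadd : q / 2 + q / 2 = q - 1 := by omega
      rw [hadd, ← hF, FiniteField.pow_card_sub_one_eq_one c hc0]
    rcases mul_self_eq_one_iff.mp h1 with h|h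
    · exact absurd ((FiniteField.isSquare_iff hch hc0).mpr (by rw [hF]; exact h)) hc
    · exact h
  rintro ⟨y, hy⟩
  have hc0' : algebraMap F E c ≠ 0 := by
    simpa using (map_ne_zero (algebraMap F E)).mpr hc0
  have hy0 : y ≠ 0 := by rintro rfl; rw [mul_zero] at hy; exact hc0' hy
  set k : ℕ := (q / 2) * s with hk
  have h2k : 2 * k = q ^ n - 1 := by
    have hqn1 : 1 ≤ q ^ n := Nat.one_le_pow n q (by omega)
    have hgeo : (q - 1) * s = q ^ n - 1 := by
      have hint : ((q:ℤ) - 1) * (s:ℤ) = (q:ℤ) ^ n - 1 := by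
        have hg := geom_sum_mul (q:ℤ) n
        have hscast : (s:ℤ) = ∑ i ∈ Finset.range n, (q:ℤ) ^ i := by
          rw [hs]; push_cast; ring
        rw [hscast]
        linear_combination hg
      have := @Nat.cast_inj ℤ _ _ ((q-1)*s) (q^n - 1)
      apply this.mp
      push_cast [Nat.cast_sub hq1, Nat.cast_sub hqn1]
      linear_combination hint
    calc 2 * k = (2 * (q / 2)) * s := by rw [hk]; ring
      _ = (q - 1) * s := by congr 1; omega
      _ = q ^ n - 1 := hgeo
  have hck : (algebraMap F E c) ^ k = -1 := by
    rw [← map_pow, hk, pow_mul, hx, hsodd.neg_one_pow, map_neg, map_one]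
  have hyk : (algebraMap F E c) ^ k = 1 := by
    rw [hy, ← sq, ← pow_mul, h2k, ← hE, FiniteField.pow_card_sub_one_eq_one y hy0]
  rw [hck] at hyk
  exact hne hyk

set_option maxHeartbeats 1000000 in
/-- Let `q ≡ 1 (mod 4)` be a prime power and `n` odd and positive. Let `χ`
be a nontrivial multiplicative character of `F_{q^n}` and `c ∈ F_q^*` a nonsquare of `F_q`.
Then `|X₁(χ)| + |X_c(χ)| ≤ 2√2 · q^{n/2}`, where `X_b(χ) = Σ_{ξ ∈ F_{q^n}^*} χ(ξ)ψ(bξ²)`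
and `ψ` is the canonical additive character of `F_{q^n}`. -/
theorem abs_X_one_add_abs_X_c_le (p a q n : ℕ) [Fact p.Prime] (ha : 0 < a) (hq : q = p ^ a)
    (hq4 : q % 4 = 1) (hn : 0 < n) (hnodd : Odd n)
    (F E : Type*) [Field F] [Fintype F] [Field E] [Fintype E] [DecidableEq E]
    [Algebra F E] [CharP E p] [Algebra (ZMod p) E]
    (hF : Fintype.card F = q) (hE : Fintype.card E = q ^ n)
    (c : F) (hc0 : c ≠ 0) (hc : ¬ IsSquare c)
    (χ : MulChar E ℂ) (hχ : χ ≠ 1)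
    (X₁ Xc : ℂ)
    (hX₁ : X₁ = ∑ ξ : Eˣ, χ (ξ : E) * canonAddChar p E ((ξ : E) ^ 2))
    (hXc : Xc = ∑ ξ : Eˣ, χ (ξ : E) * canonAddChar p E (algebraMap F E c * (ξ : E) ^ 2)) :
    ‖X₁‖ + ‖Xc‖ ≤ 2 * Real.sqrt 2 * Real.sqrt ((q : ℝ) ^ n) := by
  classical
  have hp : p.Prime := Fact.out
  have hq2 : q % 2 = 1 := by omega
  have hqn1 : 1 ≤ q ^ n := Nat.one_le_pow n q (by omega)
  have hp2 : p ≠ 2 := by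
    intro h
    subst h
    have hdvd : 2 ∣ q := hq ▸ dvd_pow_self 2 ha.ne'
    obtain ⟨m, hm⟩ := hdvd
    omega
  have h2E : (2:E) ≠ 0 := by
    intro h
    have h2 : ((2:ℕ):E) = 0 := by exact_mod_cast h
    have := (CharP.cast_eq_zero_iff E p 2).mp h2
    exact hp2 ((Nat.prime_dvd_prime_iff_eq hp Nat.prime_two).mp this)
  have hne11 : (-1:E) ≠ 1 := fun h => h2E (by linear_combination -h)
  have hchF : ringChar F ≠ 2 := by
    intro h
    obtain ⟨m, hmp, hcard⟩ := FiniteField.card F (ringChar F)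
    rw [h, hF] at hcard
    have h2q : 2 ∣ q := hcard ▸ dvd_pow_self 2 m.pos.ne'
    omega
  set ψ : E → ℂ := canonAddChar p E with hψdef
  set c' : E := algebraMap F E c with hc'def
  have hc'0 : c' ≠ 0 := by
    rw [hc'def]
    exact (map_ne_zero (algebraMap F E)).mpr hc0
  have hc'ns : ¬ IsSquare c' :=
    nonsquare_ext q n hF hE hq2 hnodd hchF c hc0 hc hne11
  -- facts about χ on units
  have hχunit : ∀ ζ : Eˣ, χ ↑ζ * χ ↑ζ⁻¹ = 1 := by
    intro ζ
    rw [← map_mul, ζ.mul_inv, map_one]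
  have hχabs : ∀ ζ : Eˣ, ‖χ ↑ζ‖ = 1 := by
    intro ζ
    have hm : (χ ↑ζ) ^ Fintype.card Eˣ = 1 := by
      rw [← map_pow, ← Units.val_pow_eq_pow_val, pow_card_eq_one, Units.val_one, map_one]
    have hcardpos : Fintype.card Eˣ ≠ 0 := Fintype.card_ne_zero
    have := Complex.norm_eq_one_of_pow_eq_one hm hcardpos
    exact this
  have hχne : ∀ ζ : Eˣ, χ ↑ζ ≠ 0 := by
    intro ζ h
    have := hχabs ζ
    rw [h] at this
    simp at this
  have hχconj : ∀ ζ : Eˣ, (starRingEnd ℂ) (χ ↑ζ) = χ ↑ζ⁻¹ := by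
    intro ζ
    have h1 : χ ↑ζ * (starRingEnd ℂ) (χ ↑ζ) = 1 := by
      rw [Complex.mul_conj, Complex.normSq_eq_norm_sq, hχabs]; norm_num
    exact mul_left_cancel₀ (hχne ζ) (h1.trans (hχunit ζ).symm)
  -- key expansion of |S_b|^2
  have key : ∀ b : E,
      (∑ ξ : Eˣ, χ ↑ξ * ψ (b * (↑ξ:E)^2)) * (starRingEnd ℂ) (∑ ξ : Eˣ, χ ↑ξ * ψ (b * (↑ξ:E)^2))
      = ∑ t : Eˣ, χ ↑t * ∑ ζ : Eˣ, ψ (b * ((↑t:E)^2 - 1) * (↑ζ:E)^2) := by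
    intro b
    have hconjterm : ∀ ζ : Eˣ, (starRingEnd ℂ) (χ ↑ζ * ψ (b * (↑ζ:E)^2))
        = χ ↑ζ⁻¹ * ψ (-(b * (↑ζ:E)^2)) := by
      intro ζ
      rw [map_mul, hχconj, hψdef, canonAddChar_conj]
    calc (∑ ξ : Eˣ, χ ↑ξ * ψ (b * (↑ξ:E)^2))
          * (starRingEnd ℂ) (∑ ξ : Eˣ, χ ↑ξ * ψ (b * (↑ξ:E)^2))
        = (∑ ξ : Eˣ, χ ↑ξ * ψ (b * (↑ξ:E)^2))
          * ∑ ζ : Eˣ, χ ↑ζ⁻¹ * ψ (-(b * (↑ζ:E)^2)) := by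
          rw [map_sum, Finset.sum_congr rfl fun ζ _ => hconjterm ζ]
      _ = ∑ ξ : Eˣ, ∑ ζ : Eˣ, (χ ↑ξ * ψ (b * (↑ξ:E)^2)) * (χ ↑ζ⁻¹ * ψ (-(b * (↑ζ:E)^2))) :=
          Finset.sum_mul_sum _ _ _ _
      _ = ∑ ζ : Eˣ, ∑ ξ : Eˣ, (χ ↑ξ * ψ (b * (↑ξ:E)^2)) * (χ ↑ζ⁻¹ * ψ (-(b * (↑ζ:E)^2))) :=
          Finset.sum_comm
      _ = ∑ ζ : Eˣ, ∑ t : Eˣ, χ ↑t * ψ (b * ((↑t:E)^2 - 1) * (↑ζ:E)^2) := by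
          refine Finset.sum_congr rfl fun ζ _ => ?_
          refine (Fintype.sum_equiv (Equiv.mulRight ζ) _ _ fun t => ?_).symm
          have e1 : χ ↑(t * ζ) * χ ↑ζ⁻¹ = χ ↑t := by
            rw [← map_mul]
            congr 1
            rw [Units.val_mul, mul_assoc, ζ.mul_inv, mul_one]
          have e2 : ψ (b * (↑(t * ζ):E)^2) * ψ (-(b * (↑ζ:E)^2))
              = ψ (b * ((↑t:E)^2 - 1) * (↑ζ:E)^2) := by
            rw [hψdef, ← canonAddChar_add]
            congr 1
            rw [Units.val_mul]
            ring
          show χ ↑t * ψ (b * ((↑t:E)^2 - 1) * (↑ζ:E)^2)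
              = (χ ↑((Equiv.mulRight ζ) t) * ψ (b * (↑((Equiv.mulRight ζ) t):E)^2))
                * (χ ↑ζ⁻¹ * ψ (-(b * (↑ζ:E)^2)))
          rw [show ((Equiv.mulRight ζ) t) = t * ζ from rfl, mul_mul_mul_comm, e1, e2]
      _ = ∑ t : Eˣ, χ ↑t * ∑ ζ : Eˣ, ψ (b * ((↑t:E)^2 - 1) * (↑ζ:E)^2) := by
          rw [Finset.sum_comm]
          exact Finset.sum_congr rfl fun t _ => (Finset.mul_sum _ _ _).symm
  -- inner sums
  have hA : ∀ t : Eˣ, ∑ s : Eˣ, ψ (((↑t:E)^2 - 1) * ↑s)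
      = (if (↑t:E)^2 = 1 then ((q:ℂ)^n) else 0) - 1 := by
    intro t
    by_cases ht : (↑t:E)^2 = 1
    · rw [if_pos ht]
      calc ∑ s : Eˣ, ψ (((↑t:E)^2 - 1) * ↑s)
          = ∑ _s : Eˣ, (1:ℂ) := by
            refine Finset.sum_congr rfl fun s _ => ?_
            rw [ht, sub_self, zero_mul, hψdef]
            exact canonAddChar_zero p E
        _ = ((q:ℂ)^n) - 1 := by
            rw [Finset.sum_const, nsmul_eq_mul, mul_one, Finset.card_univ, Fintype.card_units, hE,
              Nat.cast_sub hqn1]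
            push_cast
            ring
    · rw [if_neg ht]
      have hu : ((↑t:E)^2 - 1) ≠ 0 := sub_ne_zero.mpr ht
      have hsum := canonAddChar_sum_eq_zero p E _ hu
      rw [sum_units_eq E (fun x => canonAddChar p E (((↑t:E)^2 - 1) * x))] at hsum
      rw [mul_zero, canonAddChar_zero] at hsum
      rw [hψdef]
      linear_combination hsum
  -- the two special points t = ±1
  have h1m1 : (1:Eˣ) ≠ -1 := by
    intro h
    apply hne11
    have := congrArg Units.val h
    rw [Units.val_one, Units.val_neg, Units.val_one] at this
    exact this.symm
  have hfil : Finset.univ.filter (fun t : Eˣ => (↑t:E)^2 = 1) = {1, -1} := by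
    ext t
    simp only [Finset.mem_filter, Finset.mem_univ, true_and, Finset.mem_insert,
      Finset.mem_singleton]
    constructor
    · intro h
      have hsq : (↑t:E)^2 = ((1:E))^2 := by rw [h]; norm_num
      rcases sq_eq_sq_iff_eq_or_eq_neg.mp hsq with h'|h'
      · exact Or.inl (Units.ext (by rw [h', Units.val_one]))
      · exact Or.inr (Units.ext (by rw [h', Units.val_neg, Units.val_one]))
    · rintro (rfl|rfl)
      · rw [Units.val_one]; norm_num
      · rw [Units.val_neg, Units.val_one]; ring
  have hsum0 : ∑ t : Eˣ, χ ↑t = 0 := by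
    have hnt := MulChar.sum_eq_zero_of_ne_one hχ
    rw [sum_units_eq E (fun x => χ x)] at hnt
    rw [MulChar.map_nonunit χ not_isUnit_zero] at hnt
    linear_combination hnt
  -- assemble the mean square identity
  have hX1eq : X₁ = ∑ ξ : Eˣ, χ ↑ξ * ψ ((1:E) * (↑ξ:E)^2) := by
    rw [hX₁]
    exact Finset.sum_congr rfl fun ξ _ => by rw [one_mul]
  have hXc2 : Xc = ∑ ξ : Eˣ, χ ↑ξ * ψ (c' * (↑ξ:E)^2) := hXc
  have hT : X₁ * (starRingEnd ℂ) X₁ + Xc * (starRingEnd ℂ) Xc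
      = 2 * (q:ℂ)^n * (1 + χ (-1)) := by
    rw [hX1eq, hXc2, key 1, key c', ← Finset.sum_add_distrib]
    have hper : ∀ t : Eˣ,
        χ ↑t * (∑ ζ : Eˣ, ψ ((1:E) * ((↑t:E)^2 - 1) * (↑ζ:E)^2))
        + χ ↑t * (∑ ζ : Eˣ, ψ (c' * ((↑t:E)^2 - 1) * (↑ζ:E)^2))
        = χ ↑t * (2 * ((if (↑t:E)^2 = 1 then ((q:ℂ)^n) else 0) - 1)) := by
      intro t
      rw [← mul_add]
      congr 1
      have hf := fiber_sum h2E c' hc'0 hc'ns (fun x => ψ (((↑t:E)^2 - 1) * x))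
      rw [← hA t, ← hf]
      congr 1
      · exact Finset.sum_congr rfl fun ζ _ => by congr 1; ring
      · exact Finset.sum_congr rfl fun ζ _ => by congr 1; ring
    rw [Finset.sum_congr rfl fun t _ => hper t]
    have hexp : ∀ t : Eˣ, χ ↑t * (2 * ((if (↑t:E)^2 = 1 then ((q:ℂ)^n) else 0) - 1))
        = 2 * ((if (↑t:E)^2 = 1 then ((q:ℂ)^n * χ ↑t) else 0) - χ ↑t) := by
      intro t
      by_cases h : (↑t:E)^2 = 1 <;> simp only [h, if_true, if_false, if_pos, if_neg] <;> ring
    rw [Finset.sum_congr rfl fun t _ => hexp t, ← Finset.mul_sum, Finset.sum_sub_distrib,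
      ← Finset.sum_filter, hfil, Finset.sum_pair h1m1, hsum0]
    rw [Units.val_one, Units.val_neg, Units.val_one, map_one]
    ring
  -- deduce the real bound
  have hχm1 : χ (-1) = 1 ∨ χ (-1) = -1 := by
    have : χ (-1) * χ (-1) = 1 := by
      rw [← map_mul]
      norm_num
    exact mul_self_eq_one_iff.mp this
  have habs2 : (‖X₁‖)^2 + (‖Xc‖)^2 ≤ 4 * (q:ℝ)^n := by
    have hT' : ((Complex.normSq X₁ + Complex.normSq Xc : ℝ) : ℂ)
        = 2 * (q:ℂ)^n * (1 + χ (-1)) := by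
      rw [← hT, Complex.mul_conj, Complex.mul_conj]
      push_cast
      ring
    rw [Complex.sq_norm, Complex.sq_norm]
    rcases hχm1 with h|h
    · have : ((Complex.normSq X₁ + Complex.normSq Xc : ℝ) : ℂ) = ((4 * (q:ℝ)^n : ℝ) : ℂ) := by
        rw [hT', h]
        push_cast
        ring
      have := Complex.ofReal_injective this
      linarith [this.le]
    · have : ((Complex.normSq X₁ + Complex.normSq Xc : ℝ) : ℂ) = ((0 : ℝ) : ℂ) := by
        rw [hT', h]
        push_cast
        ring
      have h0 := Complex.ofReal_injective this
      have hqn : (0:ℝ) ≤ 4 * (q:ℝ)^n := by positivity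
      linarith
  -- final elementary estimate
  have ha1 : 0 ≤ ‖X₁‖ := norm_nonneg _
  have ha2 : 0 ≤ ‖Xc‖ := norm_nonneg _
  have h8 : (‖X₁‖ + ‖Xc‖)^2 ≤ 8 * (q:ℝ)^n := by
    nlinarith [sq_nonneg (‖X₁‖ - ‖Xc‖)]
  calc ‖X₁‖ + ‖Xc‖
      = Real.sqrt ((‖X₁‖ + ‖Xc‖)^2) :=
        (Real.sqrt_sq (by positivity)).symm
    _ ≤ Real.sqrt (8 * (q:ℝ)^n) := Real.sqrt_le_sqrt h8
    _ = 2 * Real.sqrt 2 * Real.sqrt ((q:ℝ)^n) := by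
        rw [Real.sqrt_mul (by norm_num : (0:ℝ) ≤ 8)]
        congr 1
        rw [show (8:ℝ) = 2^2 * 2 by norm_num, Real.sqrt_mul (by positivity),
          Real.sqrt_sq (by norm_num)]
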